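/- Real solutions of the n=2 reduction system: assume a_2² - b_2² ≠ 0 and that the quadratic (a_2²-b_2²)y² + (-a_1²+2a_0a_2+b_1²-2b_0b_2)y + (a_0²-b_0²) has complex (non-real) roots, i.e., (b_0²-a_0²)(b_2²-a_2²) > 0 and |-a_1²+2a_0a_2+b_1²-2b_0b_2| < 2√((b_0²-a_0²)(b_2²-a_2²)). Then α_0 = √((b_0²-a_0²)/(b_2²-a_2²)) and α_1 = ±√((2·sign(a_2²-b_2²)·√((b_0²-a_0²)(b_2²-a_2²)) - (-a_1²+2a_0a_2+b_1²-2b_0b_2))/(a_2²-b_2²)) are well-defined real numbers solving the system a_0²-b_0² = (a_2²-b_2²)α_0² and -a_1²+2a_0a_2+b_1²-2b_0b_2 = (a_2²-b_2²)(2α_0 - α_1²). -/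

import Mathlib

theorem n_two_reduction_solutions_caseI
    (a0 a1 a2 b0 b1 b2 : ℝ)
    (hne : a2 ^ 2 ≠ b2 ^ 2)
    (h1 : 0 < (b0 ^ 2 - a0 ^ 2) * (b2 ^ 2 - a2 ^ 2))
    (h2 : |(-a1 ^ 2 + 2 * a0 * a2 + b1 ^ 2 - 2 * b0 * b2)|
        < 2 * Real.sqrt ((b0 ^ 2 - a0 ^ 2) * (b2 ^ 2 - a2 ^ 2)))
    (ε : ℝ) (hε : ε = 1 ∨ ε = -1) :
    0 ≤ (b0 ^ 2 - a0 ^ 2) / (b2 ^ 2 - a2 ^ 2) ∧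
    0 ≤ (2 * (if 0 < a2 ^ 2 - b2 ^ 2 then (1 : ℝ) else -1)
          * Real.sqrt ((b0 ^ 2 - a0 ^ 2) * (b2 ^ 2 - a2 ^ 2))
          - (-a1 ^ 2 + 2 * a0 * a2 + b1 ^ 2 - 2 * b0 * b2)) / (a2 ^ 2 - b2 ^ 2) ∧
    (let α0 : ℝ := Real.sqrt ((b0 ^ 2 - a0 ^ 2) / (b2 ^ 2 - a2 ^ 2));
     let α1 : ℝ := ε * Real.sqrt
        ((2 * (if 0 < a2 ^ 2 - b2 ^ 2 then (1 : ℝ) else -1)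
            * Real.sqrt ((b0 ^ 2 - a0 ^ 2) * (b2 ^ 2 - a2 ^ 2))
            - (-a1 ^ 2 + 2 * a0 * a2 + b1 ^ 2 - 2 * b0 * b2)) / (a2 ^ 2 - b2 ^ 2));
     a0 ^ 2 - b0 ^ 2 = (a2 ^ 2 - b2 ^ 2) * α0 ^ 2 ∧
     -a1 ^ 2 + 2 * a0 * a2 + b1 ^ 2 - 2 * b0 * b2
        = (a2 ^ 2 - b2 ^ 2) * (2 * α0 - α1 ^ 2)) := by
  have hB : b2 ^ 2 - a2 ^ 2 ≠ 0 := sub_ne_zero.mpr (Ne.symm hne)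
  set A := b0 ^ 2 - a0 ^ 2 with hAdef
  set B := b2 ^ 2 - a2 ^ 2 with hBdef
  set M := -a1 ^ 2 + 2 * a0 * a2 + b1 ^ 2 - 2 * b0 * b2 with hMdef
  set S := Real.sqrt (A * B) with hSdef
  have hS0 : 0 ≤ S := Real.sqrt_nonneg _
  have hS : S ^ 2 = A * B := Real.sq_sqrt h1.le
  have habsM : -(2 * S) < M ∧ M < 2 * S :=
    abs_lt.mp h2
  have hdiv : A / B = (A * B) / B ^ 2 := by field_simp
  have hpos : 0 < A / B := by rw [hdiv]; positivity
  have haB : a2 ^ 2 - b2 ^ 2 = -B := by rw [hBdef]; ring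
  have hkey : Real.sqrt (A / B) = S / |B| := by
    rw [hdiv, Real.sqrt_div h1.le, Real.sqrt_sq_eq_abs]
  have hε2 : ε ^ 2 = 1 := by rcases hε with h | h <;> rw [h] <;> norm_num
  rcases hB.lt_or_gt with hBneg | hBpos
  · have hif : (if 0 < a2 ^ 2 - b2 ^ 2 then (1 : ℝ) else -1) = 1 := by
      rw [if_pos]; rw [haB]; linarith
    rw [hif, haB, hkey, abs_of_neg hBneg]
    have hr : 0 ≤ (2 * 1 * S - M) / -B := by
      apply div_nonneg (by linarith [habsM.2]) (by linarith)
    refine ⟨hpos.le, hr, ?_⟩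
    have e1 : Real.sqrt (A / B) ^ 2 = A / B := Real.sq_sqrt hpos.le
    have e2 : Real.sqrt ((2 * 1 * S - M) / -B) ^ 2
        = (2 * 1 * S - M) / -B := Real.sq_sqrt hr
    rw [hkey, abs_of_neg hBneg] at e1
    constructor
    · rw [e1]; field_simp; ring
    · rw [mul_pow, hε2, one_mul, e2]
      simp only [div_neg]
      field_simp
      ring
  · have hif : (if 0 < a2 ^ 2 - b2 ^ 2 then (1 : ℝ) else -1) = -1 := by
      rw [if_neg]; rw [haB]; linarith
    rw [hif, haB, hkey, abs_of_pos hBpos]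
    have hr : 0 ≤ (2 * -1 * S - M) / -B := by
      rw [div_nonneg_iff]; right
      constructor <;> [linarith [habsM.1]; linarith]
    refine ⟨hpos.le, hr, ?_⟩
    have e1 : Real.sqrt (A / B) ^ 2 = A / B := Real.sq_sqrt hpos.le
    have e2 : Real.sqrt ((2 * -1 * S - M) / -B) ^ 2
        = (2 * -1 * S - M) / -B := Real.sq_sqrt hr
    rw [hkey, abs_of_pos hBpos] at e1
    constructor
    · rw [e1]; field_simp; ring
    · rw [mul_pow, hε2, one_mul, e2]
      simp only [div_neg]
      field_simp
      ring
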